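/- Let d be an integer with d ≥ 3 and let g : (0,∞) → ℝ be a twice continuously differentiable function satisfying g''(y) + ((d-3)/y - y/2) g'(y) - (d-2)/y² · g(y)(g(y)-1)(g(y)-2) = 0 for all y > 0. Then the function h(y) = y³ g'(y) satisfies the second-order linear equation y² h''(y) = α(y) h'(y) + β(y) h(y) for all y > 0, where α(y) = (1/2) y (y² - 2d + 14) and β(y) = d - 10 + 3(d-2)(1 - g(y))². -/

import Mathlib

open Real Set Filter Topology

/-- If `g : (0,∞) → ℝ` is `C²` and satisfies the Yang–Mills shrinker equation, then
`h(y) = y³ g'(y)` satisfies `y² h'' = α h' + β h` with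
`α(y) = (1/2) y (y² - 2d + 14)` and `β(y) = d - 10 + 3(d-2)(1-g)²`. -/
theorem h_equation_yang_mills (d : ℕ) (hd : 3 ≤ d) (g : ℝ → ℝ)
    (hg : ContDiffOn ℝ 2 g (Ioi 0))
    (hode : ∀ y : ℝ, 0 < y →
      deriv (deriv g) y + (((d : ℝ) - 3) / y - y / 2) * deriv g y
        - ((d : ℝ) - 2) / y ^ 2 * (g y * (g y - 1) * (g y - 2)) = 0) :
    ∀ y : ℝ, 0 < y →
      y ^ 2 * deriv (deriv (fun z => z ^ 3 * deriv g z)) y =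
        1 / 2 * y * (y ^ 2 - 2 * (d : ℝ) + 14) *
            deriv (fun z => z ^ 3 * deriv g z) y +
          ((d : ℝ) - 10 + 3 * ((d : ℝ) - 2) * (1 - g y) ^ 2) *
            (y ^ 3 * deriv g y) := by
  -- differentiability facts
  have hgd : ContDiffOn ℝ 1 (deriv g) (Ioi 0) := by
    have := hg.deriv_of_isOpen (m := 1) isOpen_Ioi (by norm_num)
    simpa using this
  have hdiffg : ∀ y : ℝ, 0 < y → DifferentiableAt ℝ g y := fun y hy =>
    (hg.differentiableOn (by norm_num)).differentiableAt (Ioi_mem_nhds hy)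
  have hdiffg' : ∀ y : ℝ, 0 < y → DifferentiableAt ℝ (deriv g) y := fun y hy =>
    (hgd.differentiableOn (by norm_num)).differentiableAt (Ioi_mem_nhds hy)
  -- the ODE rewritten
  have hB : ∀ y : ℝ, 0 < y → deriv (deriv g) y =
      (y / 2 - ((d : ℝ) - 3) / y) * deriv g y
        + ((d : ℝ) - 2) / y ^ 2 * (g y * (g y - 1) * (g y - 2)) := by
    intro y hy
    linear_combination hode y hy
  -- step 1: deriv h = F on Ioi 0
  set F : ℝ → ℝ := fun z =>
    ((6 - (d : ℝ)) * z ^ 2 + z ^ 4 / 2) * deriv g z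
      + ((d : ℝ) - 2) * z * (g z * (g z - 1) * (g z - 2)) with hF
  have hstep1 : ∀ y : ℝ, 0 < y →
      deriv (fun z => z ^ 3 * deriv g z) y = F y := by
    intro y hy
    have h1 : HasDerivAt (fun z : ℝ => z ^ 3 * deriv g z)
        ((3 : ℝ) * y ^ 2 * deriv g y + y ^ 3 * deriv (deriv g) y) y := by
      have := (hasDerivAt_pow 3 y).mul (hdiffg' y hy).hasDerivAt
      exact this.congr_deriv (by norm_num <;> ring)
    rw [h1.deriv, hB y hy, hF]
    field_simp
    ring
  intro y hy
  -- step 2: deriv (deriv h) y = deriv F y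
  have hEq : deriv (deriv (fun z => z ^ 3 * deriv g z)) y = deriv F y := by
    apply Filter.EventuallyEq.deriv_eq
    filter_upwards [Ioi_mem_nhds hy] with z hz
    exact hstep1 z hz
  -- step 3: compute deriv F y
  set A := deriv g y with hA
  set B := deriv (deriv g) y with hBdef
  set G := g y with hG
  have hgy : HasDerivAt g A y := (hdiffg y hy).hasDerivAt
  have hgy' : HasDerivAt (deriv g) B y := (hdiffg' y hy).hasDerivAt
  have hP : HasDerivAt (fun z => g z * (g z - 1) * (g z - 2))
      ((A * (G - 1) + G * A) * (G - 2) + G * (G - 1) * A) y :=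
    ((hgy.mul (hgy.sub_const 1)).mul (hgy.sub_const 2))
  have hF1 : HasDerivAt (fun z : ℝ => (6 - (d : ℝ)) * z ^ 2 + z ^ 4 / 2)
      ((6 - (d : ℝ)) * (2 * y) + 4 * y ^ 3 / 2) y := by
    have := (((hasDerivAt_pow 2 y).const_mul (6 - (d : ℝ)))).add
      ((hasDerivAt_pow 4 y).div_const 2)
    exact this.congr_deriv (by norm_num <;> ring)
  have hF2 : HasDerivAt (fun z : ℝ => ((d : ℝ) - 2) * z) ((d : ℝ) - 2) y := by
    simpa using (hasDerivAt_id y).const_mul ((d : ℝ) - 2)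
  have hFder : HasDerivAt F
      (((6 - (d : ℝ)) * (2 * y) + 4 * y ^ 3 / 2) * A
        + ((6 - (d : ℝ)) * y ^ 2 + y ^ 4 / 2) * B
        + (((d : ℝ) - 2) * (G * (G - 1) * (G - 2))
            + ((d : ℝ) - 2) * y * ((A * (G - 1) + G * A) * (G - 2) + G * (G - 1) * A))) y := by
    exact (hF1.mul hgy').add (hF2.mul hP)
  rw [hEq, hFder.deriv, hstep1 y hy, hF]
  rw [hBdef, hB y hy, ← hA, ← hG]
  field_simp
  ring
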